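/- The infinite lower triangular array B = (b_{n,k}(q))_{n,k ≥ 0} is q-totally positive: for every m ≥ 1 and all strictly increasing sequences 0 ≤ n_1 < ... < n_m and 0 ≤ k_1 < ... < k_m, the determinant of the m × m matrix whose (s,t) entry is b_{n_s, k_t}(q) is a polynomial in q with nonnegative coefficients. -/

import Mathlib

open Polynomial

open Finset

/-- The triangular array `B = (b_{n,k}(q))` defined by `b_{0,0} = 1`, `b_{n,k} = 0` for `k > n`,
`b_{n,0} = (1+q) b_{n-1,0} + 2q b_{n-1,1}` and
`b_{n,k} = b_{n-1,k-1} + (1+q) b_{n-1,k} + q b_{n-1,k+1}` for `k ≥ 1`. -/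
noncomputable def bB : ℕ → ℕ → Polynomial ℝ
  | 0, 0 => 1
  | 0, _ + 1 => 0
  | n + 1, 0 => (1 + Polynomial.X) * bB n 0 + 2 * Polynomial.X * bB n 1
  | n + 1, k + 1 => bB n k + (1 + Polynomial.X) * bB n (k + 1) + Polynomial.X * bB n (k + 2)


def Pnn (p : ℝ[X]) : Prop := ∀ r, 0 ≤ p.coeff r

lemma Pnn.add {p q : ℝ[X]} (hp : Pnn p) (hq : Pnn q) : Pnn (p + q) := by
  intro r; rw [coeff_add]; exact add_nonneg (hp r) (hq r)

lemma Pnn.mul {p q : ℝ[X]} (hp : Pnn p) (hq : Pnn q) : Pnn (p * q) := by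
  intro r; rw [coeff_mul]
  exact Finset.sum_nonneg fun x _ => mul_nonneg (hp _) (hq _)

lemma Pnn.zero : Pnn (0 : ℝ[X]) := by intro r; simp
lemma Pnn.one : Pnn (1 : ℝ[X]) := by
  intro r; rcases eq_or_ne r 0 with h | h <;> simp [h, coeff_one]
lemma Pnn.X : Pnn (Polynomial.X : ℝ[X]) := by
  intro r; rw [coeff_X]; split <;> norm_num
lemma Pnn.Xpow (k : ℕ) : Pnn (Polynomial.X ^ k : ℝ[X]) := by
  intro r; rw [coeff_X_pow]; split <;> norm_num
lemma Pnn.sum {α : Type*} (s : Finset α) (f : α → ℝ[X]) (h : ∀ a ∈ s, Pnn (f a)) :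
    Pnn (∑ a ∈ s, f a) := by
  intro r; rw [finset_sum_coeff]
  exact Finset.sum_nonneg fun a ha => h a ha r


variable {R : Type*} [CommRing R]

lemma det_row0 {m : ℕ} (M : Matrix (Fin (m+1)) (Fin (m+1)) R)
    (h : ∀ j, j ≠ 0 → M 0 j = 0) :
    M.det = M 0 0 * (M.submatrix Fin.succ Fin.succ).det := by
  rw [Matrix.det_succ_row_zero, Fin.sum_univ_succ]
  have h2 : ∀ j : Fin m, (-1 : R) ^ ((j.succ : Fin (m+1)) : ℕ) * M 0 j.succ *
      (M.submatrix Fin.succ (Fin.succAbove j.succ)).det = 0 := by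
    intro j; rw [h j.succ (Fin.succ_ne_zero j)]; ring
  simp only [h2, Finset.sum_const_zero, add_zero, Fin.val_zero, pow_zero, one_mul,
    Fin.succAbove_zero]



noncomputable def Jm : ℕ → ℕ → ℝ[X] := fun j k =>
  if k = j + 1 then 1
  else if k = j then 1 + X
  else if j = k + 1 then (if k = 0 then 2 * X else X)
  else 0

lemma Jm_gt {j k : ℕ} (h : j + 1 < k) : Jm j k = 0 := by
  unfold Jm; have h1 : k ≠ j + 1 := by omega
  have h2 : k ≠ j := by omega
  have h3 : j ≠ k + 1 := by omega
  simp [h1, h2, h3]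

lemma Jm_lt {j k : ℕ} (h : k + 1 < j) : Jm j k = 0 := by
  unfold Jm; have h1 : k ≠ j + 1 := by omega
  have h2 : k ≠ j := by omega
  have h3 : j ≠ k + 1 := by omega
  simp [h1, h2, h3]

lemma Jm_diag (j : ℕ) : Jm j j = 1 + X := by
  unfold Jm
  have h1 : j ≠ j + 1 := by omega
  simp [h1]

lemma Jm_super (j : ℕ) : Jm j (j + 1) = 1 := by unfold Jm; simp

lemma Jm_sub (k : ℕ) : Jm (k + 1) k = (if k = 0 then 2 * X else X) := by
  unfold Jm
  have h1 : k ≠ k + 1 + 1 := by omega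
  have h2 : k ≠ k + 1 := by omega
  simp [h1, h2]

noncomputable def geomS (a : ℕ) : ℝ[X] := ∑ i ∈ Finset.range a, X ^ i

lemma Xgeom (a : ℕ) : X * geomS a = geomS (a + 1) - 1 := by
  induction a with
  | zero => simp [geomS]
  | succ a ih =>
    unfold geomS at *
    rw [Finset.sum_range_succ, Finset.sum_range_succ (n := a + 1)]
    ring_nf
    ring_nf at ih
    rw [mul_comm] at ih ⊢
    linear_combination ih

lemma geomS_succ (a : ℕ) : geomS (a+1) = geomS a + X ^ a := Finset.sum_range_succ _ _

noncomputable def blockDet (N L : ℕ) : ℝ[X] :=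
  if L = 0 then 1 else if N = 0 then 1 + X ^ L else geomS (L + 1)

lemma blockDet_pos {N : ℕ} (hN : N ≠ 0) (L : ℕ) : blockDet N L = geomS (L + 1) := by
  unfold blockDet
  rcases Nat.eq_zero_or_pos L with h | h
  · subst h; simp [hN, geomS]
  · have : L ≠ 0 := by omega
    simp [this, hN]

variable {R : Type*} [CommRing R]

lemma det_col0 {m : ℕ} (M : Matrix (Fin (m+1)) (Fin (m+1)) R)
    (h : ∀ i, i ≠ 0 → M i 0 = 0) :
    M.det = M 0 0 * (M.submatrix Fin.succ Fin.succ).det := by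
  rw [Matrix.det_succ_column_zero, Fin.sum_univ_succ]
  have h2 : ∀ i : Fin m, (-1 : R) ^ ((i.succ : Fin (m+1)) : ℕ) * M i.succ 0 *
      (M.submatrix (Fin.succAbove i.succ) Fin.succ).det = 0 := by
    intro i; rw [h i.succ (Fin.succ_ne_zero i)]; ring
  simp only [h2, Finset.sum_const_zero, add_zero, Fin.val_zero, pow_zero, one_mul,
    Fin.succAbove_zero]

lemma blockdet_eq : ∀ L N, Matrix.det (Matrix.of (fun i j : Fin L => Jm (N + i) (N + j)))
    = blockDet N L := by
  intro L
  induction L using Nat.strong_induction_on with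
  | _ L IH =>
    match L with
    | 0 => intro N; simp [Matrix.det_fin_zero, blockDet]
    | 1 =>
      intro N
      rw [Matrix.det_fin_one]
      show Jm (N + ((0 : Fin 1) : ℕ)) (N + ((0 : Fin 1) : ℕ)) = blockDet N 1
      rcases Nat.eq_zero_or_pos N with h | h
      · subst h; simp [Jm_diag, blockDet]
      · have hN : N ≠ 0 := by omega
        simp [Jm_diag, blockDet, hN, geomS, Finset.sum_range_succ]
    | (l+2) =>
      intro N
      set M : Matrix (Fin (l+2)) (Fin (l+2)) ℝ[X] :=
        Matrix.of (fun i j : Fin (l+2) => Jm (N + i) (N + j)) with hM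
      show M.det = blockDet N (l+2)
      rw [Matrix.det_succ_row_zero, Fin.sum_univ_succ, Fin.sum_univ_succ]
      have hrest : ∀ j : Fin l, (-1 : ℝ[X]) ^ ((j.succ.succ : Fin (l+2)) : ℕ) * M 0 j.succ.succ *
          (M.submatrix Fin.succ (Fin.succAbove j.succ.succ)).det = 0 := by
        intro j
        have hzz : M 0 j.succ.succ = 0 := by
          show Jm (N + ((0 : Fin (l+2)) : ℕ)) (N + (j.succ.succ : ℕ)) = 0
          apply Jm_gt
          have hv : (j.succ.succ : ℕ) = (j : ℕ) + 2 := by simp [Fin.val_succ]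
          have hv0 : ((0 : Fin (l+2)) : ℕ) = 0 := rfl
          omega
        rw [hzz]; ring
      rw [Finset.sum_eq_zero (fun j _ => hrest j)]
      -- term 0
      have hsub0 : (M.submatrix Fin.succ (Fin.succAbove 0)).det = blockDet (N+1) (l+1) := by
        rw [Fin.succAbove_zero]
        have : M.submatrix Fin.succ Fin.succ
            = Matrix.of (fun i j : Fin (l+1) => Jm ((N+1) + i) ((N+1) + j)) := by
          apply Matrix.ext
          intro i j
          show Jm (N + (i.succ : ℕ)) (N + (j.succ : ℕ)) = Jm ((N+1) + i) ((N+1) + j)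
          rw [Fin.val_succ, Fin.val_succ]
          congr 1 <;> omega
        rw [this, IH (l+1) (by omega)]
      -- term 1
      have hsub1 : (M.submatrix Fin.succ (Fin.succAbove 1)).det
          = Jm (N + 1) N * blockDet (N+2) l := by
        have hc : ∀ i : Fin (l+1), i ≠ 0 → (M.submatrix Fin.succ (Fin.succAbove 1)) i 0 = 0 := by
          intro i hi
          show M i.succ ((1 : Fin (l+2)).succAbove 0) = 0
          rw [Fin.one_succAbove_zero]
          show Jm (N + (i.succ : ℕ)) (N + ((0 : Fin (l+2)) : ℕ)) = 0
          apply Jm_lt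
          have hvi : (i : ℕ) ≠ 0 := fun hh => hi (Fin.ext hh)
          rw [Fin.val_succ]
          have hv0 : ((0 : Fin (l+2)) : ℕ) = 0 := rfl
          omega
        rw [det_col0 _ hc]
        have he : (M.submatrix Fin.succ (Fin.succAbove 1)) 0 0 = Jm (N + 1) N := by
          show M (0 : Fin (l+1)).succ ((1 : Fin (l+2)).succAbove 0) = _
          rw [Fin.one_succAbove_zero]
          show Jm (N + ((0 : Fin (l+1)).succ : ℕ)) (N + ((0 : Fin (l+2)) : ℕ)) = _
          norm_num
        rw [he]
        congr 1
        have : (M.submatrix Fin.succ (Fin.succAbove 1)).submatrix Fin.succ Fin.succ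
            = Matrix.of (fun i j : Fin l => Jm ((N+2) + i) ((N+2) + j)) := by
          apply Matrix.ext
          intro i j
          show M i.succ.succ ((1 : Fin (l+2)).succAbove j.succ) = _
          rw [Fin.one_succAbove_succ]
          show Jm (N + (i.succ.succ : ℕ)) (N + (j.succ.succ : ℕ)) = _
          rw [Fin.val_succ, Fin.val_succ, Fin.val_succ, Fin.val_succ]
          congr 1 <;> omega
        rw [this, IH l (by omega)]
      have hone : Fin.succ (0 : Fin (l+1)) = (1 : Fin (l+2)) := rfl
      rw [hone, hsub0, hsub1]
      have hm00 : M 0 0 = 1 + X := by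
        show Jm (N + ((0 : Fin (l+2)) : ℕ)) (N + ((0 : Fin (l+2)) : ℕ)) = _
        norm_num [Jm_diag]
      have hm01 : M 0 1 = 1 := by
        show Jm (N + ((0 : Fin (l+2)) : ℕ)) (N + ((1 : Fin (l+2)) : ℕ)) = _
        have : ((1 : Fin (l+2)) : ℕ) = 1 := rfl
        rw [this]
        norm_num [Jm_super]
      have hv0 : ((0 : Fin (l+2)) : ℕ) = 0 := rfl
      have hv1 : ((1 : Fin (l+2)) : ℕ) = 1 := rfl
      rw [hm00, hm01, hv0, hv1]
      have hw : Jm (N + 1) N = (if N = 0 then 2 * X else X) := Jm_sub N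
      rcases Nat.eq_zero_or_pos N with h | h
      · subst h
        norm_num at hw
        rw [hw, blockDet_pos (by omega) (l+1)]
        have hb2 : blockDet (0 + 2) l = geomS (l+1) := blockDet_pos (by omega) l
        rw [hb2]
        have hbl : blockDet 0 (l+2) = 1 + X ^ (l+2) := by simp [blockDet]
        rw [hbl]
        have e1 := Xgeom (l+2)
        have e2 := Xgeom (l+1)
        have e3 := geomS_succ (l+2)
        simp only [show l+1+1 = l+2 from by omega, show l+2+1 = l+3 from by omega] at e1 e2 e3 ⊢
        linear_combination e1 - 2 * e2 + e3
      · have hN : N ≠ 0 := by omega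
        simp only [if_neg hN] at hw
        rw [hw, blockDet_pos (by omega) (l+1), blockDet_pos (by omega) l,
          blockDet_pos hN (l+2)]
        have e1 := Xgeom (l+2)
        have e2 := Xgeom (l+1)
        simp only [show l+1+1 = l+2 from by omega, show l+2+1 = l+3 from by omega] at e1 e2 ⊢
        linear_combination e1 - e2

lemma Pnn_blockDet (N L : ℕ) : Pnn (blockDet N L) := by
  unfold blockDet
  split_ifs
  · exact Pnn.one
  · exact Pnn.add Pnn.one (Pnn.Xpow L)
  · exact Pnn.sum _ _ (fun i _ => Pnn.Xpow i)

lemma Pnn_Jm (j k : ℕ) : Pnn (Jm j k) := by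
  have h2 : Pnn (2 * X : ℝ[X]) := by
    have : (2 * X : ℝ[X]) = X + X := by ring
    rw [this]; exact Pnn.add Pnn.X Pnn.X
  unfold Jm
  split_ifs <;>
    first
      | exact Pnn.one
      | exact Pnn.add Pnn.one Pnn.X
      | exact h2
      | exact Pnn.X
      | exact Pnn.zero

lemma smono_diff {m : ℕ} {f : Fin m → ℕ} (hf : StrictMono f) :
    ∀ (d : ℕ) (x y : Fin m), (y : ℕ) + d = (x : ℕ) → f y + d ≤ f x := by
  intro d
  induction d with
  | zero => intro x y h; have : y = x := Fin.ext (by omega); subst this; omega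
  | succ d ih =>
    intro x y h
    have hym : (y : ℕ) + d < m := by have := x.isLt; omega
    have h1 := ih ⟨(y : ℕ) + d, hym⟩ y (by simp)
    have h2 : f ⟨(y : ℕ) + d, hym⟩ < f x := hf (by simp [Fin.lt_def]; omega)
    omega

theorem Jtp : ∀ m (r c : Fin m → ℕ), StrictMono r → StrictMono c →
    Pnn (Matrix.det (Matrix.of fun s t => Jm (r s) (c t))) := by
  intro m
  induction m using Nat.strong_induction_on with
  | _ m IH =>
  match m with
  | 0 => intro r c _ _; rw [Matrix.det_fin_zero]; exact Pnn.one
  | (m+1) =>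
    intro r c hr hc
    classical
    set M : Matrix (Fin (m+1)) (Fin (m+1)) ℝ[X] := Matrix.of fun s t => Jm (r s) (c t) with hM
    show Pnn M.det
    rcases lt_trichotomy (r 0) (c 0) with h0 | h0 | h0
    · rcases Nat.lt_or_ge (r 0 + 1) (c 0) with h1 | h1
      · have hz : M.det = 0 := Matrix.det_eq_zero_of_row_eq_zero 0 (fun t => by
          show Jm (r 0) (c t) = 0
          exact Jm_gt (by have := hc.monotone (Fin.zero_le t); omega))
        rw [hz]; exact Pnn.zero
      · have hc0 : c 0 = r 0 + 1 := by omega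
        rw [det_row0 M (fun t ht => by
          show Jm (r 0) (c t) = 0
          refine Jm_gt ?_
          have h2 : c 0 < c t := hc (Fin.pos_of_ne_zero ht)
          omega)]
        refine Pnn.mul ?_ (IH m (by omega) (r ∘ Fin.succ) (c ∘ Fin.succ)
            (hr.comp Fin.strictMono_succ) (hc.comp Fin.strictMono_succ))
        show Pnn (Jm (r 0) (c 0))
        rw [hc0, Jm_super]; exact Pnn.one
    · -- diagonal case
      set N := c 0 with hNdef
      have hr0 : r 0 = N := h0
      let rr : ℕ → ℕ := fun i => if h : i < m + 1 then r ⟨i, h⟩ else 0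
      let cc : ℕ → ℕ := fun i => if h : i < m + 1 then c ⟨i, h⟩ else 0
      let P : ℕ → Prop := fun l => l ≤ m + 1 ∧ ∀ i, i < l → rr i = N + i ∧ cc i = N + i
      have hfz : (⟨0, Nat.succ_pos m⟩ : Fin (m+1)) = 0 := by ext; simp
      have hP1 : P 1 := by
        refine ⟨by omega, fun i hi => ?_⟩
        have hi0 : i = 0 := by omega
        subst hi0
        constructor
        · show (if h : 0 < m + 1 then r ⟨0, h⟩ else 0) = N + 0
          rw [dif_pos (Nat.succ_pos m), hfz, hr0]
          rfl
        · show (if h : 0 < m + 1 then c ⟨0, h⟩ else 0) = N + 0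
          rw [dif_pos (Nat.succ_pos m), hfz]
          rfl
      set L := Nat.findGreatest P (m+1) with hLdef
      have hL1 : 1 ≤ L := Nat.le_findGreatest (by omega) hP1
      have hLle : L ≤ m + 1 := Nat.findGreatest_le (m+1)
      have hPL : P L := Nat.findGreatest_spec (show 1 ≤ m + 1 by omega) hP1
      have hrun : ∀ i, (hi : i < L) → r ⟨i, by omega⟩ = N + i ∧ c ⟨i, by omega⟩ = N + i := by
        intro i hi
        have := hPL.2 i hi
        have him : i < m + 1 := by omega
        constructor
        · have h1 := this.1
          rw [show rr i = r ⟨i, him⟩ from dif_pos him] at h1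
          exact h1
        · have h2 := this.2
          rw [show cc i = c ⟨i, him⟩ from dif_pos him] at h2
          exact h2
      by_cases hLm : L = m + 1
      · -- whole matrix is the block
        have hMeq : M = Matrix.of (fun i j : Fin (m+1) => Jm (N + i) (N + j)) := by
          apply Matrix.ext
          intro i j
          show Jm (r i) (c j) = _
          have h1 := (hrun i (by omega)).1
          have h2 := (hrun j (by omega)).2
          rw [Fin.eta] at h1 h2
          rw [h1, h2]
          rfl
        rw [hMeq, blockdet_eq]
        exact Pnn_blockDet _ _
      · have hLlt : L < m + 1 := by omega
        have hnot : ¬ P (L + 1) := Nat.findGreatest_is_greatest (n := m+1) (k := L+1) (show Nat.findGreatest P (m+1) < L + 1 from hLdef ▸ (by omega)) (by omega)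
        have hfail : ¬ (rr L = N + L ∧ cc L = N + L) := by
          intro hcon
          apply hnot
          refine ⟨by omega, fun i hi => ?_⟩
          rcases Nat.lt_or_ge i L with h | h
          · exact hPL.2 i h
          · have : i = L := by omega
            subst this; exact hcon
        -- lower bounds for entries beyond the run
        have hout_r : ∀ i : ℕ, (h : i < m + 1) → L ≤ i → N + i ≤ r ⟨i, h⟩ := by
          intro i h hLi
          have hLm1 : L - 1 < m + 1 := by omega
          have hbase := (hrun (L-1) (by omega)).1
          have := smono_diff hr (i - (L-1)) ⟨i, h⟩ ⟨L-1, by omega⟩ (by simp; omega)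
          simp only [hbase] at this
          omega
        have hout_c : ∀ i : ℕ, (h : i < m + 1) → L ≤ i → N + i ≤ c ⟨i, h⟩ := by
          intro i h hLi
          have hbase := (hrun (L-1) (by omega)).2
          have := smono_diff hc (i - (L-1)) ⟨i, h⟩ ⟨L-1, by omega⟩ (by simp; omega)
          simp only [hbase] at this
          omega
        -- the equivalence
        have hsum : L + (m + 1 - L) = m + 1 := by omega
        let e : Fin L ⊕ Fin (m+1-L) ≃ Fin (m+1) := finSumFinEquiv.trans (finCongr hsum)
        have hvl : ∀ i : Fin L, ((e (Sum.inl i)) : ℕ) = (i : ℕ) := by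
          intro i; simp [e]
        have hvr : ∀ s : Fin (m+1-L), ((e (Sum.inr s)) : ℕ) = L + (s : ℕ) := by
          intro s; simp [e]
        have hdet : M.det = (M.submatrix e e).det := (Matrix.det_submatrix_equiv_self e M).symm
        -- block values
        have hrl : ∀ i : Fin L, r (e (Sum.inl i)) = N + (i : ℕ) := by
          intro i
          have h1 := (hrun i (i.isLt)).1
          have : e (Sum.inl i) = ⟨(i : ℕ), by omega⟩ := Fin.ext (by rw [hvl])
          rw [this, h1]
        have hcl : ∀ j : Fin L, c (e (Sum.inl j)) = N + (j : ℕ) := by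
          intro j
          have h1 := (hrun j (j.isLt)).2
          have : e (Sum.inl j) = ⟨(j : ℕ), by omega⟩ := Fin.ext (by rw [hvl])
          rw [this, h1]
        have hrr : ∀ s : Fin (m+1-L), N + L + (s : ℕ) ≤ r (e (Sum.inr s)) := by
          intro s
          have : e (Sum.inr s) = ⟨L + (s : ℕ), by omega⟩ := Fin.ext (by rw [hvr])
          rw [this]
          have := hout_r (L + (s : ℕ)) (by omega) (by omega)
          omega
        have hcr : ∀ s : Fin (m+1-L), N + L + (s : ℕ) ≤ c (e (Sum.inr s)) := by
          intro s
          have : e (Sum.inr s) = ⟨L + (s : ℕ), by omega⟩ := Fin.ext (by rw [hvr])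
          rw [this]
          have := hout_c (L + (s : ℕ)) (by omega) (by omega)
          omega
        -- the D block
        set A : Matrix (Fin L) (Fin L) ℝ[X] := Matrix.of (fun i j : Fin L => Jm (N + i) (N + j)) with hA
        set D : Matrix (Fin (m+1-L)) (Fin (m+1-L)) ℝ[X] :=
          Matrix.of (fun s t => Jm (r (e (Sum.inr s))) (c (e (Sum.inr t)))) with hD
        have hPnnD : Pnn D.det := by
          refine IH (m+1-L) (by omega) (fun s => r (e (Sum.inr s))) (fun t => c (e (Sum.inr t)))
            ?_ ?_
          · intro s t hst
            apply hr
            rw [Fin.lt_def, hvr, hvr]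
            exact Nat.add_lt_add_left hst L
          · intro s t hst
            apply hc
            rw [Fin.lt_def, hvr, hvr]
            exact Nat.add_lt_add_left hst L
        have hPnnA : Pnn A.det := by rw [hA, blockdet_eq]; exact Pnn_blockDet _ _
        rw [hdet]
        by_cases hrL : rr L = N + L
        · -- top-right block vanishes
          have hccL : cc L ≠ N + L := fun hcon => hfail ⟨hrL, hcon⟩
          have hcLgt : N + L + 1 ≤ c ⟨L, hLlt⟩ := by
            have h1 := hout_c L hLlt (le_refl L)
            have h2 : cc L = c ⟨L, hLlt⟩ := dif_pos hLlt
            omega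
          have hsplit : M.submatrix e e = Matrix.fromBlocks A 0
              (Matrix.of (fun (s : Fin (m+1-L)) (t : Fin L) => Jm (r (e (Sum.inr s))) (c (e (Sum.inl t))))) D := by
            apply Matrix.ext
            rintro (i | i) (j | j)
            · show Jm (r (e (Sum.inl i))) (c (e (Sum.inl j))) = A i j
              rw [hrl, hcl]; rfl
            · show Jm (r (e (Sum.inl i))) (c (e (Sum.inr j))) = 0
              rw [hrl]
              apply Jm_gt
              have h1 := hcr j
              have h2 : c ⟨L, hLlt⟩ ≤ c (e (Sum.inr j)) := by
                apply hc.monotone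
                rw [Fin.le_def, hvr]
                simp
              have h3 : (i : ℕ) < L := i.isLt
              omega
            · rfl
            · rfl
          rw [hsplit, Matrix.det_fromBlocks_zero₁₂]
          exact Pnn.mul hPnnA hPnnD
        · -- bottom-left block vanishes
          have hrLgt : N + L + 1 ≤ r ⟨L, hLlt⟩ := by
            have h1 := hout_r L hLlt (le_refl L)
            have h2 : rr L = r ⟨L, hLlt⟩ := dif_pos hLlt
            omega
          have hsplit : M.submatrix e e = Matrix.fromBlocks A
              (Matrix.of (fun (i : Fin L) (t : Fin (m+1-L)) => Jm (r (e (Sum.inl i))) (c (e (Sum.inr t)))))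
              0 D := by
            apply Matrix.ext
            rintro (i | i) (j | j)
            · show Jm (r (e (Sum.inl i))) (c (e (Sum.inl j))) = A i j
              rw [hrl, hcl]; rfl
            · rfl
            · show Jm (r (e (Sum.inr i))) (c (e (Sum.inl j))) = 0
              rw [hcl]
              apply Jm_lt
              have h1 := hrr i
              have h2 : r ⟨L, hLlt⟩ ≤ r (e (Sum.inr i)) := by
                apply hr.monotone
                rw [Fin.le_def, hvr]
                simp
              have h3 : (j : ℕ) < L := j.isLt
              omega
            · rfl
          rw [hsplit, Matrix.det_fromBlocks_zero₂₁]
          exact Pnn.mul hPnnA hPnnD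
    · -- r 0 > c 0
      rcases Nat.lt_or_ge (c 0 + 1) (r 0) with h1 | h1
      · have hz : M.det = 0 := Matrix.det_eq_zero_of_column_eq_zero 0 (fun s => by
          show Jm (r s) (c 0) = 0
          exact Jm_lt (by have := hr.monotone (Fin.zero_le s); omega))
        rw [hz]; exact Pnn.zero
      · have hr0 : r 0 = c 0 + 1 := by omega
        rw [det_col0 M (fun s hs => by
          show Jm (r s) (c 0) = 0
          refine Jm_lt ?_
          have h2 : r 0 < r s := hr (Fin.pos_of_ne_zero hs)
          omega)]
        refine Pnn.mul ?_ (IH m (by omega) (r ∘ Fin.succ) (c ∘ Fin.succ)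
            (hr.comp Fin.strictMono_succ) (hc.comp Fin.strictMono_succ))
        show Pnn (Jm (r 0) (c 0))
        rw [hr0, Jm_sub]
        split_ifs
        · have : (2 * X : ℝ[X]) = X + X := by ring
          rw [this]; exact Pnn.add Pnn.X Pnn.X
        · exact Pnn.X


variable {R : Type*} [CommRing R]

lemma det_mul_expand {m K : ℕ} (A : Matrix (Fin m) (Fin K) R) (B : Matrix (Fin K) (Fin m) R) :
    (A * B).det = ∑ g : Fin m → Fin K, (∏ s, A s (g s)) * (B.submatrix g id).det := by
  classical
  have h1 : (A * B).det
      = Matrix.detRowAlternating (fun s : Fin m => ∑ j : Fin K, A s j • B j) := by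
    congr 1
    funext s t
    simp [Matrix.mul_apply, Finset.sum_apply, Pi.smul_apply, smul_eq_mul]
  rw [h1]
  rw [show (Matrix.detRowAlternating (fun s : Fin m => ∑ j : Fin K, A s j • B j) : R)
      = (Matrix.detRowAlternating (R := R) (n := Fin m)).toMultilinearMap
          (fun s : Fin m => ∑ j : Fin K, A s j • B j) from rfl]
  rw [MultilinearMap.map_sum]
  apply Finset.sum_congr rfl
  intro g _
  rw [show (fun i : Fin m => A i (g i) • B (g i)) = (fun i : Fin m => A i (g i) • (B ∘ g) i)
    from rfl]
  rw [MultilinearMap.map_smul_univ]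
  rw [smul_eq_mul]
  rfl

theorem cauchy_binet {m K : ℕ} (A : Matrix (Fin m) (Fin K) R) (B : Matrix (Fin K) (Fin m) R) :
    (A * B).det = ∑ f ∈ Finset.univ.filter (fun f : Fin m → Fin K => StrictMono f),
      (A.submatrix id f).det * (B.submatrix f id).det := by
  classical
  rw [det_mul_expand]
  rw [← Finset.sum_filter_add_sum_filter_not Finset.univ (fun g : Fin m → Fin K =>
    Function.Injective g)]
  have hnon : ∑ g ∈ Finset.univ.filter (fun g : Fin m → Fin K => ¬ Function.Injective g),
      (∏ s, A s (g s)) * (B.submatrix g id).det = 0 := by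
    apply Finset.sum_eq_zero
    intro g hg
    rw [Finset.mem_filter] at hg
    obtain ⟨a, b, hab, hne⟩ := Function.not_injective_iff.mp hg.2
    have : (B.submatrix g id).det = 0 := by
      apply Matrix.det_zero_of_row_eq hne
      funext t
      show B (g a) t = B (g b) t
      rw [hab]
    rw [this, mul_zero]
  rw [hnon, add_zero]
  -- group injective g's
  have hgroup : ∀ f : Fin m → Fin K, StrictMono f →
      (A.submatrix id f).det * (B.submatrix f id).det
      = ∑ σ : Equiv.Perm (Fin m), (∏ s, A s (f (σ s))) * (B.submatrix (f ∘ σ) id).det := by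
    intro f hf
    have hperm : ∀ σ : Equiv.Perm (Fin m),
        (B.submatrix (f ∘ σ) id).det = (Equiv.Perm.sign σ : ℤ) * (B.submatrix f id).det := by
      intro σ
      have : B.submatrix (f ∘ σ) id = (B.submatrix f id).submatrix σ id := by
        apply Matrix.ext; intro i j; rfl
      rw [this, Matrix.det_permute]
    have hA : (A.submatrix id f).det
        = ∑ σ : Equiv.Perm (Fin m), ((Equiv.Perm.sign σ : ℤ) : R) * ∏ s, A s (f (σ s)) := by
      rw [← Matrix.det_transpose, Matrix.det_apply']
      rfl
    rw [hA, Finset.sum_mul]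
    apply Finset.sum_congr rfl
    intro σ _
    rw [hperm σ]
    push_cast
    ring
  have hsum2 : ∑ f ∈ Finset.univ.filter (fun f : Fin m → Fin K => StrictMono f),
      (A.submatrix id f).det * (B.submatrix f id).det
      = ∑ p ∈ (Finset.univ.filter (fun f : Fin m → Fin K => StrictMono f)) ×ˢ
          (Finset.univ : Finset (Equiv.Perm (Fin m))),
        (∏ s, A s (p.1 (p.2 s))) * (B.submatrix (p.1 ∘ p.2) id).det := by
    rw [Finset.sum_product]
    apply Finset.sum_congr rfl
    intro f hf
    rw [Finset.mem_filter] at hf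
    exact hgroup f hf.2
  rw [hsum2]
  -- bijection between injective g and pairs (f, σ)
  refine Finset.sum_nbij' (fun g => (g ∘ Tuple.sort g, (Tuple.sort g)⁻¹))
    (fun p => p.1 ∘ p.2) ?_ ?_ ?_ ?_ ?_
  · intro g hg
    rw [Finset.mem_filter] at hg
    have hinj := hg.2
    rw [Finset.mem_product, Finset.mem_filter]
    refine ⟨⟨Finset.mem_univ _, ?_⟩, Finset.mem_univ _⟩
    exact (Tuple.monotone_sort g).strictMono_of_injective
      (hinj.comp (Tuple.sort g).injective)
  · intro p hp
    rw [Finset.mem_product, Finset.mem_filter] at hp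
    rw [Finset.mem_filter]
    exact ⟨Finset.mem_univ _, hp.1.2.injective.comp (p.2).injective⟩
  · intro g hg
    funext s
    show g (Tuple.sort g ((Tuple.sort g)⁻¹ s)) = g s
    rw [Equiv.Perm.coe_inv, Equiv.apply_symm_apply]
  · intro p hp
    rw [Finset.mem_product, Finset.mem_filter] at hp
    obtain ⟨⟨-, hsm⟩, -⟩ := hp
    obtain ⟨f, σ⟩ := p
    simp only at hsm ⊢
    -- key : Tuple.sort (f ∘ σ) = σ⁻¹
    have hkey : (f ∘ σ) ∘ Tuple.sort (f ∘ σ) = f := by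
      have hmono : Monotone ((f ∘ σ) ∘ Tuple.sort (f ∘ σ)) := Tuple.monotone_sort _
      have hinj : Function.Injective ((f ∘ σ) ∘ Tuple.sort (f ∘ σ)) :=
        (hsm.injective.comp σ.injective).comp (Tuple.sort (f ∘ σ)).injective
      have hsm2 : StrictMono ((f ∘ σ) ∘ Tuple.sort (f ∘ σ)) := hmono.strictMono_of_injective hinj
      apply (StrictMono.range_inj hsm2 hsm).mp
      rw [Function.Surjective.range_comp (Tuple.sort (f ∘ σ)).surjective]
      exact Function.Surjective.range_comp σ.surjective f
    have hperm : σ ∘ (Tuple.sort (f ∘ σ)) = id := by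
      funext s
      apply hsm.injective
      have := congrFun hkey s
      exact this
    have hσ : Tuple.sort (f ∘ σ) = σ⁻¹ := by
      apply Equiv.ext
      intro s
      have := congrFun hperm s
      simp only [Function.comp_apply, id_eq] at this
      have : (σ⁻¹ : Equiv.Perm (Fin m)) (σ (Tuple.sort (f ∘ σ) s)) = σ⁻¹ s := by rw [this]
      rwa [Equiv.Perm.coe_inv, Equiv.symm_apply_apply] at this
    simp only [Prod.mk.injEq]
    exact ⟨hkey, by rw [hσ, inv_inv]⟩
  · intro g hg
    have h1 : ∀ s, (g ∘ Tuple.sort g) ((Tuple.sort g)⁻¹ s) = g s := fun s => by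
      show g ((Tuple.sort g) ((Tuple.sort g)⁻¹ s)) = g s
      rw [Equiv.Perm.coe_inv, Equiv.apply_symm_apply]
    have hgg : ((g ∘ (Tuple.sort g)) ∘ ((Tuple.sort g)⁻¹ : Equiv.Perm (Fin m)) : Fin m → Fin K)
        = g := funext h1
    show (∏ s, A s (g s)) * (B.submatrix g id).det
        = (∏ s, A s ((g ∘ Tuple.sort g) ((Tuple.sort g)⁻¹ s))) *
          (B.submatrix ((g ∘ Tuple.sort g) ∘ ((Tuple.sort g)⁻¹ : Equiv.Perm (Fin m))) id).det
    rw [hgg]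
    congr 1
    apply Finset.prod_congr rfl
    intro s _
    rw [h1 s]

lemma bB_tri : ∀ n k : ℕ, n < k → bB n k = 0 := by
  intro n
  induction n with
  | zero =>
    intro k hk
    match k, hk with
    | (a+1), _ => rfl
  | succ n ih =>
    intro k hk
    match k, hk with
    | (a+1), hk =>
      show bB n a + (1 + Polynomial.X) * bB n (a + 1) + Polynomial.X * bB n (a + 2) = 0
      rw [ih a (by omega), ih (a+1) (by omega), ih (a+2) (by omega)]
      ring

lemma bB_row (n k K : ℕ) (hK : n + 1 ≤ K) :
    ∑ j ∈ Finset.range K, bB n j * Jm j k = bB (n+1) k := by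
  set K' := max K (k+2) with hK'
  have hsub : Finset.range K ⊆ Finset.range K' := by
    apply Finset.range_subset_range.mpr; omega
  have hext : ∑ j ∈ Finset.range K, bB n j * Jm j k = ∑ j ∈ Finset.range K', bB n j * Jm j k := by
    apply Finset.sum_subset hsub
    intro j hj hnj
    rw [Finset.mem_range] at hj
    rw [Finset.mem_range] at hnj
    rw [bB_tri n j (by omega)]
    ring
  rw [hext]
  rcases k with _ | k
  · -- k = 0
    have h2 : ∑ j ∈ Finset.range K', bB n j * Jm j 0 = ∑ j ∈ Finset.range 2, bB n j * Jm j 0 := by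
      symm
      apply Finset.sum_subset (Finset.range_subset_range.mpr (by omega))
      intro j hj hnj
      rw [Finset.mem_range] at hj hnj
      rw [Jm_lt (by omega)]
      ring
    rw [h2, Finset.sum_range_succ, Finset.sum_range_succ, Finset.sum_range_zero]
    show 0 + bB n 0 * Jm 0 0 + bB n 1 * Jm 1 0 = (1 + Polynomial.X) * bB n 0 + 2 * Polynomial.X * bB n 1
    rw [Jm_diag, show Jm 1 0 = 2 * X from by simpa using Jm_sub 0]
    ring
  · -- k = k+1
    have h2 : ∑ j ∈ Finset.range K', bB n j * Jm j (k+1)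
        = ∑ j ∈ Finset.range (k+3), bB n j * Jm j (k+1) := by
      symm
      apply Finset.sum_subset (Finset.range_subset_range.mpr (by omega))
      intro j hj hnj
      rw [Finset.mem_range] at hj hnj
      rw [Jm_lt (by omega)]
      ring
    rw [h2, Finset.sum_range_succ, Finset.sum_range_succ, Finset.sum_range_succ]
    have h3 : ∑ j ∈ Finset.range k, bB n j * Jm j (k+1) = 0 := by
      apply Finset.sum_eq_zero
      intro j hj
      rw [Finset.mem_range] at hj
      rw [Jm_gt (by omega)]
      ring
    rw [h3]
    show 0 + bB n k * Jm k (k+1) + bB n (k+1) * Jm (k+1) (k+1) + bB n (k+2) * Jm (k+2) (k+1)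
      = bB n k + (1 + Polynomial.X) * bB n (k + 1) + Polynomial.X * bB n (k + 2)
    rw [Jm_super, Jm_diag, show Jm (k+2) (k+1) = X from by rw [Jm_sub (k+1)]; simp]
    ring

lemma main_aux : ∀ t m (n k : Fin m → ℕ), StrictMono n → StrictMono k →
    (∀ s, m + n s ≤ t) →
    Pnn (Matrix.det (Matrix.of fun s u => bB (n s) (k u))) := by
  intro t
  induction t with
  | zero =>
    intro m n k hn hk hb
    match m with
    | 0 => rw [Matrix.det_fin_zero]; exact Pnn.one
    | (m+1) => exact absurd (hb 0) (by omega)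
  | succ t IH =>
    intro m n k hn hk hb
    match m with
    | 0 => rw [Matrix.det_fin_zero]; exact Pnn.one
    | (m+1) =>
      set M : Matrix (Fin (m+1)) (Fin (m+1)) ℝ[X] := Matrix.of fun s u => bB (n s) (k u) with hM
      show Pnn M.det
      rcases Nat.eq_zero_or_pos (n 0) with hn0 | hn0
      · rcases Nat.eq_zero_or_pos (k 0) with hk0 | hk0
        · -- expand along first row
          rw [det_row0 M (fun j hj => by
            show bB (n 0) (k j) = 0
            have h1 : 0 < k j := by
              have := hk (Fin.pos_of_ne_zero hj)
              omega
            rw [hn0]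
            exact bB_tri 0 (k j) h1)]
          have h00 : M 0 0 = 1 := by
            show bB (n 0) (k 0) = 1
            rw [hn0, hk0]
            rfl
          rw [h00, one_mul]
          exact IH m (n ∘ Fin.succ) (k ∘ Fin.succ) (hn.comp Fin.strictMono_succ)
            (hk.comp Fin.strictMono_succ)
            (fun s => by
              have h := hb s.succ
              show m + n (Fin.succ s) ≤ t
              omega)
        · -- first row is zero
          have hz : M.det = 0 := Matrix.det_eq_zero_of_row_eq_zero 0 (fun j => by
            show bB (n 0) (k j) = 0
            have h1 : 0 < k j := by
              have := hk.monotone (Fin.zero_le j)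
              omega
            rw [hn0]
            exact bB_tri 0 (k j) h1)
          rw [hz]; exact Pnn.zero
      · -- all rows positive: Cauchy-Binet
        have hns : ∀ s, 1 ≤ n s := fun s => by
          have := hn.monotone (Fin.zero_le s); omega
        set K := t with hKdef
        have hnsK : ∀ s : Fin (m+1), n s ≤ K := fun s => by
          have := hb s; omega
        set A : Matrix (Fin (m+1)) (Fin K) ℝ[X] :=
          Matrix.of (fun s (j : Fin K) => bB (n s - 1) (j : ℕ)) with hA
        set Bm : Matrix (Fin K) (Fin (m+1)) ℝ[X] :=
          Matrix.of (fun (j : Fin K) u => Jm (j : ℕ) (k u)) with hB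
        have hAB : M = A * Bm := by
          apply Matrix.ext
          intro s u
          show bB (n s) (k u) = ∑ j : Fin K, bB (n s - 1) (j : ℕ) * Jm (j : ℕ) (k u)
          rw [Fin.sum_univ_eq_sum_range (fun j => bB (n s - 1) j * Jm j (k u)) K]
          rw [bB_row (n s - 1) (k u) K (by have := hns s; have := hnsK s; omega)]
          congr 1
          have := hns s
          omega
        rw [hAB, cauchy_binet]
        apply Pnn.sum
        intro f hf
        rw [Finset.mem_filter] at hf
        have hfsm : StrictMono f := hf.2
        apply Pnn.mul
        · -- minor of A
          have hAsub : (A.submatrix id f) = Matrix.of (fun s u => bB (n s - 1) ((f u : ℕ))) := by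
            apply Matrix.ext; intro s u; rfl
          rw [hAsub]
          refine IH (m+1) (fun s => n s - 1) (fun u => (f u : ℕ)) ?_ ?_ ?_
          · intro s s' hss
            have h1 := hn hss
            have h2 := hns s
            show n s - 1 < n s' - 1
            omega
          · intro u u' huu
            exact hfsm huu
          · intro s
            have h1 := hb s
            have h2 := hns s
            show (m+1) + (n s - 1) ≤ t
            omega
        · -- minor of Bm
          have hBsub : (Bm.submatrix f id) = Matrix.of (fun j u => Jm ((f j : ℕ)) (k u)) := by
            apply Matrix.ext; intro j u; rfl
          rw [hBsub]
          exact Jtp (m+1) (fun j => (f j : ℕ)) k (fun u u' huu => hfsm huu) hk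

/-- The triangular array `B` is `q`-totally positive: every minor has
nonnegative coefficients. -/
theorem bB_q_totally_positive
    (m : ℕ) (hm : 1 ≤ m)
    (n k : Fin m → ℕ) (hn : StrictMono n) (hk : StrictMono k) (r : ℕ) :
    0 ≤ (Matrix.det (Matrix.of fun s t : Fin m => bB (n s) (k t))).coeff r := by
  refine main_aux (m + Finset.univ.sup n) m n k hn hk (fun s => ?_) r
  have : n s ≤ Finset.univ.sup n := Finset.le_sup (Finset.mem_univ s)
  omega
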